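/- Let F : ℂ → ℂ → ℂ be such that (z,w) ↦ F z w is analytic (jointly) on 𝔻 × 𝔻, F 0 0 = 0, F is Hermitian-symmetric on 𝔻 × 𝔻 (F z w = conj (F (conj w) (conj z)) for all z, w ∈ 𝔻), F satisfies the PDE deriv (deriv (fun ζ => F ζ w)) z = w² · deriv (fun ξ => deriv (fun ζ => F ζ ξ) z) w for all z, w ∈ 𝔻, and the kernel k(ν,ω) = F ν (conj ω) is positive semidefinite on 𝔻 (for all finite tuples ω_i ∈ 𝔻 and c_i ∈ ℂ, Σ_{i,j} conj(c_i)·c_j·F ω_i (conj ω_j) is a nonnegative real number). Then there exists a real number c ≥ 0 such that F z w = −c · Complex.log (1 − z·w) for all z, w ∈ 𝔻. -/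

import Mathlib

open ComplexConjugate Complex Finset

lemma mem_ball_abs {z : ℂ} {r : ℝ} : z ∈ Metric.ball (0:ℂ) r ↔ ‖z‖ < r := by
  simp [Metric.mem_ball, Complex.dist_eq]

lemma const_of_hasDerivAt_zero {f : ℂ → ℂ} {r : ℝ} (hr : 0 < r)
    (h : ∀ x ∈ Metric.ball (0:ℂ) r, HasDerivAt f 0 x) {x : ℂ}
    (hx : x ∈ Metric.ball (0:ℂ) r) : f x = f 0 := by
  have h0 : (0:ℂ) ∈ Metric.ball (0:ℂ) r := by simpa [Metric.mem_ball] using hr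
  have hb := (convex_ball (0:ℂ) r).norm_image_sub_le_of_norm_hasDerivWithin_le
    (f' := fun _ => (0:ℂ)) (C := 0) (fun y hy => (h y hy).hasDerivWithinAt)
    (fun y _ => by simp) h0 hx
  rw [zero_mul] at hb
  have : ‖f x - f 0‖ = 0 := le_antisymm hb (norm_nonneg (f x - f 0))
  exact sub_eq_zero.mp (norm_eq_zero.mp this)

lemma hasDerivAt_conj_conj {f : ℂ → ℂ} {d w : ℂ}
    (hf : HasDerivAt f d (conj w)) :
    HasDerivAt (fun ξ : ℂ => conj (f (conj ξ))) (conj d) w := by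
  rw [hasDerivAt_iff_tendsto_slope] at hf ⊢
  have hconj : Filter.Tendsto (fun ξ : ℂ => (conj ξ : ℂ)) (nhdsWithin w {w}ᶜ)
      (nhdsWithin (conj w) {(conj w : ℂ)}ᶜ) := by
    rw [tendsto_nhdsWithin_iff]
    constructor
    · exact (Complex.continuous_conj.tendsto w).mono_left nhdsWithin_le_nhds
    · filter_upwards [self_mem_nhdsWithin] with ξ hξ
      simp only [Set.mem_compl_iff, Set.mem_singleton_iff] at hξ ⊢
      exact fun hc => hξ (by simpa using congrArg conj hc)
  have h2 := (Complex.continuous_conj.tendsto d).comp (hf.comp hconj)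
  apply h2.congr
  intro ξ
  simp only [Function.comp_apply, slope_def_field]
  simp [map_div₀]


lemma hasDerivAt_slice1 {E : Type*} [NormedAddCommGroup E] [NormedSpace ℂ E]
    {G : ℂ × ℂ → E} {G' : ℂ × ℂ →L[ℂ] E} {z w : ℂ} (h : HasFDerivAt G G' (z, w)) :
    HasDerivAt (fun ζ => G (ζ, w)) (G' (1, 0)) z := by
  have h1 : HasDerivAt (fun ζ : ℂ => (ζ, w)) ((1:ℂ), (0:ℂ)) z :=
    (hasDerivAt_id z).prodMk (hasDerivAt_const z w)
  exact h.comp_hasDerivAt z h1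

lemma hasDerivAt_slice2 {E : Type*} [NormedAddCommGroup E] [NormedSpace ℂ E]
    {G : ℂ × ℂ → E} {G' : ℂ × ℂ →L[ℂ] E} {z w : ℂ} (h : HasFDerivAt G G' (z, w)) :
    HasDerivAt (fun ξ => G (z, ξ)) (G' (0, 1)) w := by
  have h1 : HasDerivAt (fun ξ : ℂ => (z, ξ)) ((0:ℂ), (1:ℂ)) w :=
    (hasDerivAt_const w z).prodMk (hasDerivAt_id w)
  exact h.comp_hasDerivAt w h1

lemma neg_log_one_sub_le {s : ℝ} (h0 : 0 ≤ s) (h2 : s ≤ 1/2) :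
    -Real.log (1 - s) ≤ 2 * s := by
  have hpos : (0:ℝ) < 1 - s := by linarith
  have hinv : -Real.log (1 - s) ≤ (1 - s)⁻¹ - 1 := by
    have := Real.log_le_sub_one_of_pos (inv_pos.mpr hpos)
    rwa [Real.log_inv] at this
  have h4 : (1 - s)⁻¹ ≤ 2 * s + 1 := by
    rw [inv_eq_one_div, div_le_iff₀ hpos]; nlinarith
  linarith


set_option maxHeartbeats 2000000 in
lemma dirichlet_local_form (F : ℂ → ℂ → ℂ)
    (hA : AnalyticOn ℂ (fun p : ℂ × ℂ => F p.1 p.2)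
      (Metric.ball (0 : ℂ) 1 ×ˢ Metric.ball (0 : ℂ) 1))
    (h00 : F 0 0 = 0)
    (hSym : ∀ z w : ℂ, ‖z‖ < 1 → ‖w‖ < 1 →
      F z w = conj (F (conj w) (conj z)))
    (hPDE : ∀ z w : ℂ, ‖z‖ < 1 → ‖w‖ < 1 →
      deriv (deriv (fun ζ : ℂ => F ζ w)) z
        = w ^ 2 * deriv (fun ξ : ℂ => deriv (fun ζ : ℂ => F ζ ξ) z) w) :
    ∃ a b : ℂ, conj b = b ∧ ∀ z w : ℂ, ‖z‖ < 1/6 → ‖w‖ < 1/6 →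
      F z w = a*z + conj a * w - b * Complex.log (1 - z*w) := by
  classical
  set S : Set (ℂ × ℂ) := Metric.ball (0:ℂ) 1 ×ˢ Metric.ball (0:ℂ) 1 with hSdef
  have hSopen : IsOpen S := Metric.isOpen_ball.prod Metric.isOpen_ball
  set F2 : ℂ × ℂ → ℂ := fun p => F p.1 p.2 with hF2
  have hAN : AnalyticOnNhd ℂ F2 S := hSopen.analyticOn_iff_analyticOnNhd.mp hA
  have hmem : ∀ {z w : ℂ}, ‖z‖ < 1 → ‖w‖ < 1 → (z, w) ∈ S := by
    intro z w hz hw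
    exact ⟨mem_ball_abs.mpr hz, mem_ball_abs.mpr hw⟩
  set U : ℂ × ℂ → (ℂ × ℂ →L[ℂ] ℂ) := fun p => fderiv ℂ F2 p with hUdef
  have hUan : AnalyticOnNhd ℂ U S := hAN.fderiv
  have hF2d : ∀ p ∈ S, HasFDerivAt F2 (U p) p := fun p hp =>
    (hAN p hp).differentiableAt.hasFDerivAt
  set U' : ℂ × ℂ → (ℂ × ℂ →L[ℂ] (ℂ × ℂ →L[ℂ] ℂ)) := fun p => fderiv ℂ U p with hU'def
  have hUd : ∀ p ∈ S, HasFDerivAt U (U' p) p := fun p hp =>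
    (hUan p hp).differentiableAt.hasFDerivAt
  -- first-order slice derivatives
  have hu1 : ∀ z w : ℂ, ‖z‖ < 1 → ‖w‖ < 1 →
      HasDerivAt (fun ζ => F ζ w) (U (z, w) (1, 0)) z := by
    intro z w hz hw
    exact hasDerivAt_slice1 (hF2d _ (hmem hz hw))
  have hu2 : ∀ z w : ℂ, ‖z‖ < 1 → ‖w‖ < 1 →
      HasDerivAt (fun ξ => F z ξ) (U (z, w) (0, 1)) w := by
    intro z w hz hw
    exact hasDerivAt_slice2 (hF2d _ (hmem hz hw))
  -- second-order: derivative of p ↦ U p y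
  have hUyd : ∀ (y : ℂ × ℂ) (p : ℂ × ℂ), p ∈ S →
      HasFDerivAt (fun q => U q y)
        ((ContinuousLinearMap.apply ℂ ℂ y).comp (U' p)) p := by
    intro y p hp
    exact (ContinuousLinearMap.apply ℂ ℂ y).hasFDerivAt.comp p (hUd p hp)
  have hU1s : ∀ (y : ℂ × ℂ) (z w : ℂ), ‖z‖ < 1 → ‖w‖ < 1 →
      HasDerivAt (fun ζ => U (ζ, w) y) (U' (z, w) (1, 0) y) z := by
    intro y z w hz hw
    simpa using hasDerivAt_slice1 (hUyd y _ (hmem hz hw))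
  have hU2s : ∀ (y : ℂ × ℂ) (z w : ℂ), ‖z‖ < 1 → ‖w‖ < 1 →
      HasDerivAt (fun ξ => U (z, ξ) y) (U' (z, w) (0, 1) y) w := by
    intro y z w hz hw
    simpa using hasDerivAt_slice2 (hUyd y _ (hmem hz hw))
  -- the PDE in terms of U'
  have hPDE' : ∀ z w : ℂ, ‖z‖ < 1 → ‖w‖ < 1 →
      U' (z, w) (1, 0) (1, 0) = w ^ 2 * U' (z, w) (0, 1) (1, 0) := by
    intro z w hz hw
    have e1 : deriv (deriv (fun ζ : ℂ => F ζ w)) z = U' (z, w) (1, 0) (1, 0) := by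
      have hev : deriv (fun ζ : ℂ => F ζ w) =ᶠ[nhds z] (fun ζ => U (ζ, w) (1, 0)) := by
        filter_upwards [Metric.isOpen_ball.mem_nhds (mem_ball_abs.mpr hz)] with ζ hζ
        exact (hu1 ζ w (mem_ball_abs.mp hζ) hw).deriv
      rw [hev.deriv_eq, (hU1s (1,0) z w hz hw).deriv]
    have e2 : deriv (fun ξ : ℂ => deriv (fun ζ : ℂ => F ζ ξ) z) w
        = U' (z, w) (0, 1) (1, 0) := by
      have hev : (fun ξ : ℂ => deriv (fun ζ : ℂ => F ζ ξ) z)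
          =ᶠ[nhds w] (fun ξ => U (z, ξ) (1, 0)) := by
        filter_upwards [Metric.isOpen_ball.mem_nhds (mem_ball_abs.mpr hw)] with ξ hξ
        exact (hu1 z ξ hz (mem_ball_abs.mp hξ)).deriv
      rw [hev.deriv_eq, (hU2s (1,0) z w hz hw).deriv]
    rw [← e1, ← e2]
    exact hPDE z w hz hw
  -- Clairaut
  have hClair : ∀ p ∈ S, ∀ v y : ℂ × ℂ, U' p v y = U' p y v := by
    intro p hp v y
    have hev : ∀ᶠ q in nhds p, HasFDerivAt F2 (U q) q := by
      filter_upwards [hSopen.mem_nhds hp] with q hq using hF2d q hq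
    exact second_derivative_symmetric_of_eventually hev (hUd p hp) v y
  clear_value U'
  clear_value U
  -- characteristics: u is constant along s ↦ (s, ξ/(1+sξ))
  have huloc : ∀ z ξ : ℂ, ‖z‖ < 1/3 → ‖ξ‖ < 1/3 →
      U (z, ξ/(1+z*ξ)) (1,0) = U (0, ξ) (1,0) := by
    intro z ξ hz hξ
    have key : ∀ t ∈ Metric.ball (0:ℂ) (1/3),
        HasDerivAt (fun s : ℂ => U (s, ξ/(1+s*ξ)) (1,0)) 0 t := by
      intro t ht
      have ht' : ‖t‖ < 1/3 := mem_ball_abs.mp ht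
      have habs : ‖t*ξ‖ < 1/9 := by
        rw [norm_mul]
        nlinarith [norm_nonneg t, norm_nonneg ξ]
      have h1 : (1:ℝ) ≤ ‖1+t*ξ‖ + ‖t*ξ‖ := by
        simpa using norm_add_le (1+t*ξ) (-(t*ξ))
      have hlow : (8:ℝ)/9 < ‖1+t*ξ‖ := by linarith
      have hne : (1 + t*ξ) ≠ 0 := by
        intro hc
        rw [hc] at hlow
        simp at hlow
        linarith
      set η := ξ/(1+t*ξ) with hη
      have hηabs : ‖η‖ < 1 := by
        rw [hη, norm_div, div_lt_one (by linarith)]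
        linarith
      have hd1 : HasDerivAt (fun s : ℂ => 1 + s*ξ) ξ t := by
        simpa using ((hasDerivAt_id t).mul_const ξ).const_add 1
      have hdiv : HasDerivAt (fun s : ℂ => ξ/(1+s*ξ)) (-η^2) t := by
        have h := (hasDerivAt_const t ξ).div hd1 hne
        have e : -η^2 = (0 * (1 + t * ξ) - ξ * ξ) / (1 + t * ξ) ^ 2 := by
          rw [hη, div_pow]
          ring
        rw [e]
        exact h
      have hcurve : HasDerivAt (fun s : ℂ => ((s : ℂ), ξ/(1+s*ξ))) (((1:ℂ), -η^2) : ℂ × ℂ) t :=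
        (hasDerivAt_id t).prodMk hdiv
      have hmain := (hUyd (1,0) (t, η)
        (hmem (lt_trans ht' (by norm_num)) hηabs)).comp_hasDerivAt t hcurve
      have hval : ((ContinuousLinearMap.apply ℂ ℂ (((1:ℂ),(0:ℂ)) : ℂ × ℂ)).comp
          (U' (t, η))) (((1:ℂ), -η^2) : ℂ × ℂ) = 0 := by
        have hsplit : (((1:ℂ), -η^2) : ℂ × ℂ)
            = (((1:ℂ),(0:ℂ)) : ℂ × ℂ) + (-η^2) • (((0:ℂ),(1:ℂ)) : ℂ × ℂ) := by
          simp [Prod.ext_iff]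
        rw [ContinuousLinearMap.comp_apply, hsplit, map_add, map_smul]
        simp only [ContinuousLinearMap.apply_apply, ContinuousLinearMap.add_apply,
          ContinuousLinearMap.smul_apply]
        rw [hPDE' t η (lt_trans ht' (by norm_num)) hηabs]
        simp [smul_eq_mul]
      rw [hval] at hmain
      exact hmain
    have hconst := const_of_hasDerivAt_zero (by norm_num) key (mem_ball_abs.mpr hz)
    simpa using hconst
  -- the transport formula for u
  have hufor : ∀ z w : ℂ, ‖z‖ < 1/5 → ‖w‖ < 1/5 →
      U (z, w) (1,0) = U (0, w/(1-z*w)) (1,0) := by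
    intro z w hz hw
    have habs : ‖z*w‖ < 1/25 := by
      rw [norm_mul]
      nlinarith [norm_nonneg z, norm_nonneg w]
    have h1 : (1:ℝ) ≤ ‖1-z*w‖ + ‖z*w‖ := by
      simpa using norm_add_le (1-z*w) (z*w)
    have hlow : (24:ℝ)/25 < ‖1-z*w‖ := by linarith
    have hne : (1-z*w) ≠ 0 := by
      intro hc
      rw [hc] at hlow
      simp at hlow
      linarith
    set ξ := w/(1-z*w) with hξdef
    have hξ : ‖ξ‖ < 1/3 := by
      rw [hξdef, norm_div, div_lt_iff₀ (by linarith : (0:ℝ) < ‖1-z*w‖)]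
      linarith
    have h2 : 1 + z*ξ = (1-z*w)⁻¹ := by
      rw [hξdef]
      field_simp
      ring
    have heq : ξ/(1+z*ξ) = w := by
      rw [h2, div_eq_mul_inv, inv_inv, hξdef]
      field_simp
      exact mul_div_cancel_right₀ w (by rwa [mul_comm] at hne)
    calc U (z, w) (1,0) = U (z, ξ/(1+z*ξ)) (1,0) := by rw [heq]
      _ = U (0, ξ) (1,0) := huloc z ξ (by linarith) hξ
  -- symmetry: the w-partial in terms of the z-partial
  have h01 : ‖(0:ℂ)‖ < 1 := by norm_num
  have hvsym : ∀ z w : ℂ, ‖z‖ < 1 → ‖w‖ < 1 →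
      U (z, w) (0,1) = conj (U (conj w, conj z) (1,0)) := by
    intro z w hz hw
    have hcz : ‖conj z‖ < 1 := by rwa [Complex.norm_conj]
    have hcw : ‖conj w‖ < 1 := by rwa [Complex.norm_conj]
    have h1 := hu2 z w hz hw
    have h2 : HasDerivAt (fun ξ : ℂ => conj (F (conj ξ) (conj z)))
        (conj (U (conj w, conj z) (1,0))) w :=
      hasDerivAt_conj_conj (hu1 (conj w) (conj z) hcw hcz)
    have hev : (fun ξ : ℂ => F z ξ) =ᶠ[nhds w]
        (fun ξ => conj (F (conj ξ) (conj z))) := by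
      filter_upwards [Metric.isOpen_ball.mem_nhds (mem_ball_abs.mpr hw)] with ξ hξ
      exact hSym z ξ hz (mem_ball_abs.mp hξ)
    rw [← h1.deriv, hev.deriv_eq, h2.deriv]
  -- the constant b
  set bC : ℂ := U' ((0:ℂ),(0:ℂ)) (0,1) (1,0) with hbCdef
  have hgb : ∀ w : ℂ, ‖w‖ < 1/5 → U' ((0:ℂ), w) (0,1) (1,0) = conj bC := by
    intro w hw
    have hw1 : ‖w‖ < 1 := by linarith
    have hC : U' ((0:ℂ), w) (0,1) (1,0) = U' ((0:ℂ), w) (1,0) (0,1) :=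
      hClair (0, w) (hmem h01 hw1) _ _
    have hD : HasDerivAt (fun ζ : ℂ => U (ζ, w) (0,1)) (U' ((0:ℂ), w) (1,0) (0,1)) 0 :=
      hU1s (0,1) 0 w h01 hw1
    have hev : (fun ζ : ℂ => U (ζ, w) (0,1))
        =ᶠ[nhds (0:ℂ)] (fun ζ => conj (U ((0:ℂ), conj (ζ/(1-ζ*w))) (1,0))) := by
      filter_upwards [Metric.isOpen_ball.mem_nhds
        (mem_ball_abs.mpr (show ‖(0:ℂ)‖ < 1/5 by norm_num))] with ζ hζ
      have hζ5 : ‖ζ‖ < 1/5 := mem_ball_abs.mp hζ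
      have hζ1 : ‖ζ‖ < 1 := by linarith
      rw [hvsym ζ w hζ1 hw1, hufor (conj w) (conj ζ)
        (by rwa [Complex.norm_conj]) (by rwa [Complex.norm_conj])]
      have hc : conj (ζ/(1-ζ*w)) = conj ζ/(1-conj w * conj ζ) := by
        rw [map_div₀, map_sub, map_one, map_mul, mul_comm]
      rw [hc]
    have hφ : HasDerivAt (fun ζ : ℂ => ζ/(1-ζ*w)) 1 0 := by
      have hd1 : HasDerivAt (fun ζ : ℂ => 1-ζ*w) (-w) 0 := by
        simpa using ((hasDerivAt_id (0:ℂ)).mul_const w).const_sub 1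
      have h := (hasDerivAt_id (0:ℂ)).div hd1 (by simp)
      simp at h
      exact h
    have hgs0 : HasDerivAt (fun ξ : ℂ => conj (U ((0:ℂ), conj ξ) (1,0))) (conj bC) 0 := by
      have hbase : HasDerivAt (fun ξ : ℂ => U ((0:ℂ), ξ) (1,0)) bC (conj (0:ℂ)) := by
        simpa using hU2s (1,0) 0 0 h01 h01
      exact hasDerivAt_conj_conj hbase
    have h0' : HasDerivAt (fun ξ : ℂ => conj (U ((0:ℂ), conj ξ) (1,0))) (conj bC)
        ((fun ζ : ℂ => ζ/(1-ζ*w)) 0) := by simpa using hgs0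
    have hcomp : HasDerivAt (fun ζ : ℂ => conj (U ((0:ℂ), conj (ζ/(1-ζ*w))) (1,0)))
        (conj bC * 1) 0 := by have := h0'.comp 0 hφ; exact this
    rw [hC, ← hD.deriv, hev.deriv_eq, hcomp.deriv, mul_one]
  have hbCreal : conj bC = bC := by
    have h := hgb 0 (by norm_num)
    rw [← hbCdef] at h
    exact h.symm
  -- g is affine
  have hgaff : ∀ ξ : ℂ, ‖ξ‖ < 1/5 →
      U ((0:ℂ), ξ) (1,0) = U ((0:ℂ),(0:ℂ)) (1,0) + bC * ξ := by
    intro ξ hξ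
    have key : ∀ t ∈ Metric.ball (0:ℂ) (1/5),
        HasDerivAt (fun s : ℂ => U ((0:ℂ), s) (1,0) - bC * s) 0 t := by
      intro t ht
      have ht' := mem_ball_abs.mp ht
      have h1 : HasDerivAt (fun s : ℂ => U ((0:ℂ), s) (1,0)) (U' ((0:ℂ), t) (0,1) (1,0)) t :=
        hU2s (1,0) 0 t h01 (by linarith)
      have h2 : HasDerivAt (fun s : ℂ => bC * s) bC t := by
        simpa using (hasDerivAt_id t).const_mul bC
      have h3 := h1.sub h2
      simp only [hgb t ht', hbCreal, sub_self] at h3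
      exact h3
    have hconst := const_of_hasDerivAt_zero (by norm_num) key (mem_ball_abs.mpr hξ)
    simp only [mul_zero, sub_zero] at hconst
    linear_combination hconst
  -- final form of u and the local formula for F
  set aC : ℂ := U ((0:ℂ),(0:ℂ)) (1,0) with haCdef
  have hslit : ∀ z w : ℂ, ‖z‖ < 1 → ‖w‖ < 1 →
      (1 - z*w) ∈ Complex.slitPlane := by
    intro z w hz hw
    rw [Complex.mem_slitPlane_iff]
    left
    have habs : ‖z*w‖ < 1 := by
      rw [norm_mul]
      nlinarith [norm_nonneg z, norm_nonneg w]
    have hre : (z*w).re ≤ ‖z*w‖ := Complex.re_le_norm _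
    simp only [Complex.sub_re, Complex.one_re]
    linarith
  have hufin : ∀ z w : ℂ, ‖z‖ < 1/6 → ‖w‖ < 1/6 →
      U (z, w) (1,0) = aC + bC * (w/(1-z*w)) := by
    intro z w hz hw
    have hz5 : ‖z‖ < 1/5 := by linarith
    have hw5 : ‖w‖ < 1/5 := by linarith
    have habs : ‖z*w‖ < 1/36 := by
      rw [norm_mul]
      nlinarith [norm_nonneg z, norm_nonneg w]
    have h1 : (1:ℝ) ≤ ‖1-z*w‖ + ‖z*w‖ := by
      simpa using norm_add_le (1-z*w) (z*w)
    have hlow : (35:ℝ)/36 < ‖1-z*w‖ := by linarith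
    have hξ : ‖w/(1-z*w)‖ < 1/5 := by
      rw [norm_div, div_lt_iff₀ (by linarith)]
      linarith
    rw [hufor z w hz5 hw5, hgaff _ hξ]
  have hFz0 : ∀ z : ℂ, ‖z‖ < 1/6 → F z 0 = aC * z := by
    intro z hz
    have key : ∀ t ∈ Metric.ball (0:ℂ) (1/6),
        HasDerivAt (fun s : ℂ => F s 0 - aC * s) 0 t := by
      intro t ht
      have ht' := mem_ball_abs.mp ht
      have h1 : HasDerivAt (fun s : ℂ => F s 0) (U (t, 0) (1,0)) t :=
        hu1 t 0 (by linarith) h01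
      have h2 : HasDerivAt (fun s : ℂ => aC * s) aC t := by
        simpa using (hasDerivAt_id t).const_mul aC
      have hval : U (t, (0:ℂ)) (1,0) = aC := by
        rw [hufin t 0 ht' (by norm_num)]
        simp
      have h3 := h1.sub h2
      simp only [hval, sub_self] at h3
      exact h3
    have hconst := const_of_hasDerivAt_zero (by norm_num) key (mem_ball_abs.mpr hz)
    have hconst' : F z 0 - aC * z = F 0 0 - aC * 0 := hconst
    rw [h00] at hconst'
    simp only [mul_zero, sub_zero, zero_sub] at hconst'
    linear_combination hconst'
  have hF0w : ∀ w : ℂ, ‖w‖ < 1/6 → F 0 w = conj aC * w := by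
    intro w hw
    have hw1 : ‖w‖ < 1 := by linarith
    rw [hSym 0 w h01 hw1]
    have h : F (conj w) (conj 0) = aC * conj w := by
      rw [map_zero]
      exact hFz0 (conj w) (by rwa [Complex.norm_conj])
    rw [h, map_mul, Complex.conj_conj]
  have hloc : ∀ z w : ℂ, ‖z‖ < 1/6 → ‖w‖ < 1/6 →
      F z w = aC*z + conj aC * w - bC * Complex.log (1-z*w) := by
    intro z w hz hw
    have hw1 : ‖w‖ < 1 := by linarith
    have key : ∀ t ∈ Metric.ball (0:ℂ) (1/6),
        HasDerivAt (fun s : ℂ =>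
          F s w - (aC*s + conj aC * w - bC * Complex.log (1-s*w))) 0 t := by
      intro t ht
      have ht' := mem_ball_abs.mp ht
      have ht1 : ‖t‖ < 1 := by linarith
      have hne : (1-t*w) ≠ 0 := Complex.slitPlane_ne_zero (hslit t w ht1 hw1)
      have h1 : HasDerivAt (fun s : ℂ => F s w) (U (t, w) (1,0)) t := hu1 t w ht1 hw1
      have hd1 : HasDerivAt (fun s : ℂ => 1-s*w) (-w) t := by
        simpa using ((hasDerivAt_id t).mul_const w).const_sub 1
      have hlog : HasDerivAt (fun s : ℂ => Complex.log (1-s*w)) ((1-t*w)⁻¹ * (-w)) t := by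
        have hl : HasDerivAt Complex.log (1-t*w)⁻¹ ((fun s : ℂ => 1-s*w) t) :=
          Complex.hasDerivAt_log (hslit t w ht1 hw1)
        exact hl.comp t hd1
      have h2 : HasDerivAt (fun s : ℂ => aC*s + conj aC * w - bC * Complex.log (1-s*w))
          (aC - bC * ((1-t*w)⁻¹ * (-w))) t := by
        have ha : HasDerivAt (fun s : ℂ => aC*s + conj aC * w) aC t := by
          simpa using ((hasDerivAt_id t).const_mul aC).add_const (conj aC * w)
        exact ha.sub (hlog.const_mul bC)
      have hval : U (t, w) (1,0) - (aC - bC * ((1-t*w)⁻¹ * (-w))) = 0 := by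
        rw [hufin t w ht' hw]
        rw [div_eq_mul_inv]
        ring
      have h3 := h1.sub h2
      rwa [hval] at h3
    have hconst := const_of_hasDerivAt_zero (by norm_num) key (mem_ball_abs.mpr hz)
    have hconst' : F z w - (aC*z + conj aC * w - bC * Complex.log (1-z*w))
        = F 0 w - (aC*0 + conj aC * w - bC * Complex.log (1-0*w)) := hconst
    rw [hF0w w hw] at hconst'
    simp only [mul_zero, zero_mul, zero_sub, zero_mul, sub_zero, zero_add] at hconst'
    rw [Complex.log_one] at hconst'
    linear_combination hconst'
  exact ⟨aC, bC, hbCreal, hloc⟩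

theorem dirichlet_kernel_unique (F : ℂ → ℂ → ℂ)
    (hA : AnalyticOn ℂ (fun p : ℂ × ℂ => F p.1 p.2)
      (Metric.ball (0 : ℂ) 1 ×ˢ Metric.ball (0 : ℂ) 1))
    (h00 : F 0 0 = 0)
    (hSym : ∀ z w : ℂ, ‖z‖ < 1 → ‖w‖ < 1 →
      F z w = conj (F (conj w) (conj z)))
    (hPDE : ∀ z w : ℂ, ‖z‖ < 1 → ‖w‖ < 1 →
      deriv (deriv (fun ζ : ℂ => F ζ w)) z
        = w ^ 2 * deriv (fun ξ : ℂ => deriv (fun ζ : ℂ => F ζ ξ) z) w)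
    (hPos : ∀ (N : ℕ) (ω : Fin N → ℂ), (∀ i, ‖ω i‖ < 1) →
      ∀ c : Fin N → ℂ,
        (∑ i, ∑ j, conj (c i) * c j * F (ω i) (conj (ω j))).im = 0 ∧
          0 ≤ (∑ i, ∑ j, conj (c i) * c j * F (ω i) (conj (ω j))).re) :
    ∃ c : ℝ, 0 ≤ c ∧ ∀ z w : ℂ, ‖z‖ < 1 → ‖w‖ < 1 →
      F z w = -(c : ℂ) * Complex.log (1 - z * w) := by
  obtain ⟨a, b, hbreal, hloc⟩ := dirichlet_local_form F hA h00 hSym hPDE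
  have hbre : ((b.re : ℝ) : ℂ) = b := Complex.conj_eq_iff_re.mp hbreal
  set br : ℝ := b.re with hbrdef
  -- single point positivity
  have hsingle : ∀ ω : ℂ, ‖ω‖ < 1 → 0 ≤ (F ω (conj ω)).re := by
    intro ω hω
    have h := hPos 1 ![ω] (by
      intro i
      fin_cases i
      simpa using hω) ![1]
    simpa [Fin.sum_univ_one] using h.2
  -- real-part inequality on the diagonal
  have hRe : ∀ ω : ℂ, ‖ω‖ < 1/6 →
      0 ≤ 2*(a*ω).re - br * Real.log (1 - ‖ω‖ ^ 2) := by
    intro ω hω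
    have h1 := hsingle ω (by linarith)
    have hpos : (0:ℝ) < 1 - ‖ω‖ ^ 2 := by
      nlinarith [norm_nonneg ω]
    have hdiag : F ω (conj ω) = a*ω + conj (a*ω)
        - ((br : ℂ)) * ((Real.log (1 - ‖ω‖ ^ 2) : ℝ) : ℂ) := by
      rw [hloc ω (conj ω) hω (by rwa [Complex.norm_conj])]
      rw [Complex.ofReal_log (le_of_lt hpos)]
      rw [hbre]
      congr 1
      · rw [map_mul]
      · congr 1
        rw [Complex.mul_conj, Complex.normSq_eq_norm_sq]
        push_cast
        ring
    rw [hdiag] at h1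
    simp only [Complex.sub_re, Complex.add_re, Complex.conj_re, Complex.mul_re,
      Complex.ofReal_re, Complex.ofReal_im, mul_zero, zero_mul, sub_zero] at h1
    rw [Complex.mul_re]
    linarith
  -- b.re is nonnegative
  have hb0 : 0 ≤ br := by
    have h6 : ∀ t : ℝ, |t| < 1/6 → ‖((t:ℝ):ℂ)‖ < 1/6 := by
      intro t ht
      rwa [Complex.norm_real, Real.norm_eq_abs]
    have hplus := hRe ((1/10 : ℝ) : ℂ) (h6 _ (by rw [abs_of_pos (by norm_num : (0:ℝ) < 1/10)]; norm_num))
    have hminus := hRe ((-(1/10) : ℝ) : ℂ) (h6 _ (by rw [abs_neg, abs_of_pos (by norm_num : (0:ℝ) < 1/10)]; norm_num))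
    rw [Complex.norm_real, Real.norm_eq_abs] at hplus hminus
    simp only [Complex.mul_re, Complex.ofReal_re, Complex.ofReal_im, mul_zero, sub_zero] at hplus hminus
    have hL : Real.log (1 - |(1/10 : ℝ)|^2) < 0 := by
      rw [show (1 : ℝ) - |(1/10 : ℝ)|^2 = 99/100 by rw [abs_of_pos] <;> norm_num]
      exact Real.log_neg (by norm_num) (by norm_num)
    have he : |(-(1/10) : ℝ)| = |(1/10 : ℝ)| := by rw [abs_neg]
    rw [he] at hminus
    nlinarith [hplus, hminus, hL]
  -- a must vanish
  have ha0 : a = 0 := by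
    by_contra hne
    have hA0 : 0 < ‖a‖ := norm_pos_iff.mpr hne
    set t : ℝ := 1/(7*(1+‖a‖)*(1+br)) with htdef
    have ht0 : 0 < t := by positivity
    set ω : ℂ := ((t:ℝ):ℂ) * conj a with hωdef
    have hωabs : ‖ω‖ = t * ‖a‖ := by
      rw [hωdef, norm_mul, Complex.norm_real, Real.norm_eq_abs, Complex.norm_conj, abs_of_pos ht0]
    have hkey : t * (7*(1+‖a‖)*(1+br)) = 1 := by
      rw [htdef]
      field_simp
    have hta : t * ‖a‖ < 1/7 := by
      nlinarith [hkey, hb0, hA0, ht0, mul_pos ht0 hA0]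
    have hω6 : ‖ω‖ < 1/6 := by
      rw [hωabs]
      linarith
    have hω6' : ‖-ω‖ < 1/6 := by rwa [norm_neg]
    have h2 := hRe (-ω) hω6'
    rw [norm_neg] at h2
    have hre : (a*(-ω)).re = -(t * Complex.normSq a) := by
      have he : a * (-ω) = -(((t:ℝ):ℂ) * (a * conj a)) := by rw [hωdef]; ring
      rw [he, Complex.mul_conj]
      simp [Complex.ofReal_mul]
    rw [hre] at h2
    set s : ℝ := ‖ω‖ ^ 2 with hsdef
    have hs12 : s ≤ 1/2 := by
      rw [hsdef, hωabs]
      nlinarith [hta, mul_pos ht0 hA0]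
    have hs0 : 0 ≤ s := by positivity
    have hlog := neg_log_one_sub_le hs0 hs12
    have hseq : s = t^2 * Complex.normSq a := by
      rw [hsdef, hωabs, Complex.normSq_eq_norm_sq]
      ring
    have hbrt : br * t < 1 := by
      nlinarith [hkey, hb0, hA0, ht0, mul_pos ht0 hA0, mul_nonneg hb0 (le_of_lt ht0)]
    have hN : 0 < Complex.normSq a := by
      rw [Complex.normSq_eq_norm_sq]
      positivity
    -- 2 t N ≤ br * (-log(1-s)) ≤ br * 2 s = 2 br t² N  ⇒ 1 ≤ br t, contradiction
    nlinarith [h2, hlog, hb0, mul_le_mul_of_nonneg_left hlog hb0, hN, ht0,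
      mul_pos ht0 hN, hbrt, hseq]
  -- the clean local formula
  have hlocb : ∀ z w : ℂ, ‖z‖ < 1/6 → ‖w‖ < 1/6 →
      F z w = -((br:ℝ):ℂ) * Complex.log (1-z*w) := by
    intro z w hz hw
    rw [hloc z w hz hw, ha0, ← hbre]
    simp
  -- globalize via the identity theorem
  have hSopen : IsOpen (Metric.ball (0:ℂ) 1 ×ˢ Metric.ball (0:ℂ) 1) :=
    Metric.isOpen_ball.prod Metric.isOpen_ball
  have hAN : AnalyticOnNhd ℂ (fun p : ℂ × ℂ => F p.1 p.2)
      (Metric.ball (0:ℂ) 1 ×ˢ Metric.ball (0:ℂ) 1) :=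
    hSopen.analyticOn_iff_analyticOnNhd.mp hA
  have hslit : ∀ z w : ℂ, ‖z‖ < 1 → ‖w‖ < 1 →
      (1 - z*w) ∈ Complex.slitPlane := by
    intro z w hz hw
    rw [Complex.mem_slitPlane_iff]
    left
    have habs : ‖z*w‖ < 1 := by
      rw [norm_mul]
      nlinarith [norm_nonneg z, norm_nonneg w]
    have hre : (z*w).re ≤ ‖z*w‖ := Complex.re_le_norm _
    simp only [Complex.sub_re, Complex.one_re]
    linarith
  have hstep1 : ∀ w : ℂ, ‖w‖ < 1/6 → ∀ z : ℂ, ‖z‖ < 1 →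
      F z w + ((br:ℝ):ℂ) * Complex.log (1-z*w) = 0 := by
    intro w hw
    have hw1 : ‖w‖ < 1 := by linarith
    have han : AnalyticOnNhd ℂ (fun z : ℂ => F z w + ((br:ℝ):ℂ) * Complex.log (1-z*w))
        (Metric.ball (0:ℂ) 1) := by
      intro z hz
      have hz1 : ‖z‖ < 1 := mem_ball_abs.mp hz
      have h1 : AnalyticAt ℂ (fun z : ℂ => F z w) z := by
        have hp : AnalyticAt ℂ (fun p : ℂ × ℂ => F p.1 p.2) (z, w) :=
          hAN (z, w) ⟨mem_ball_abs.mpr hz1, mem_ball_abs.mpr hw1⟩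
        have h1' : AnalyticAt ℂ ((fun p : ℂ × ℂ => F p.1 p.2) ∘ (fun z : ℂ => (z, w))) z :=
          AnalyticAt.comp (f := fun z : ℂ => (z, w)) (x := z) hp
            (analyticAt_id.prod analyticAt_const)
        exact h1'
      have h2 : AnalyticAt ℂ (fun z : ℂ => Complex.log (1-z*w)) z := by
        have hin : AnalyticAt ℂ (fun z : ℂ => 1-z*w) z :=
          analyticAt_const.sub (analyticAt_id.mul analyticAt_const)
        exact hin.clog (hslit z w hz1 hw1)
      exact h1.add (analyticAt_const.mul h2)
    have hz0 : (fun z : ℂ => F z w + ((br:ℝ):ℂ) * Complex.log (1-z*w)) =ᶠ[nhds (0:ℂ)] 0 := by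
      filter_upwards [Metric.isOpen_ball.mem_nhds
        (mem_ball_abs.mpr (show ‖(0:ℂ)‖ < 1/6 by norm_num))] with z hz
      have h := hlocb z w (mem_ball_abs.mp hz) hw
      simp [h]
    have heq := han.eqOn_zero_of_preconnected_of_eventuallyEq_zero
      ((convex_ball (0:ℂ) 1).isPreconnected)
      (mem_ball_abs.mpr (by norm_num : ‖(0:ℂ)‖ < 1)) hz0
    intro z hz1
    exact heq (mem_ball_abs.mpr hz1)
  have hstep2 : ∀ z : ℂ, ‖z‖ < 1 → ∀ w : ℂ, ‖w‖ < 1 →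
      F z w + ((br:ℝ):ℂ) * Complex.log (1-z*w) = 0 := by
    intro z hz1
    have han : AnalyticOnNhd ℂ (fun w : ℂ => F z w + ((br:ℝ):ℂ) * Complex.log (1-z*w))
        (Metric.ball (0:ℂ) 1) := by
      intro w hw
      have hw1 : ‖w‖ < 1 := mem_ball_abs.mp hw
      have h1 : AnalyticAt ℂ (fun w : ℂ => F z w) w := by
        have hp : AnalyticAt ℂ (fun p : ℂ × ℂ => F p.1 p.2) (z, w) :=
          hAN (z, w) ⟨mem_ball_abs.mpr hz1, mem_ball_abs.mpr hw1⟩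
        have h1' : AnalyticAt ℂ ((fun p : ℂ × ℂ => F p.1 p.2) ∘ (fun w : ℂ => (z, w))) w :=
          AnalyticAt.comp (f := fun w : ℂ => (z, w)) (x := w) hp
            (analyticAt_const.prod analyticAt_id)
        exact h1'
      have h2 : AnalyticAt ℂ (fun w : ℂ => Complex.log (1-z*w)) w := by
        have hin : AnalyticAt ℂ (fun w : ℂ => 1-z*w) w :=
          analyticAt_const.sub (analyticAt_const.mul analyticAt_id)
        exact hin.clog (hslit z w hz1 hw1)
      exact h1.add (analyticAt_const.mul h2)
    have hz0 : (fun w : ℂ => F z w + ((br:ℝ):ℂ) * Complex.log (1-z*w)) =ᶠ[nhds (0:ℂ)] 0 := by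
      filter_upwards [Metric.isOpen_ball.mem_nhds
        (mem_ball_abs.mpr (show ‖(0:ℂ)‖ < 1/6 by norm_num))] with w hw
      have h := hstep1 w (mem_ball_abs.mp hw) z hz1
      simpa using h
    have heq := han.eqOn_zero_of_preconnected_of_eventuallyEq_zero
      ((convex_ball (0:ℂ) 1).isPreconnected)
      (mem_ball_abs.mpr (by norm_num : ‖(0:ℂ)‖ < 1)) hz0
    intro w hw1
    exact heq (mem_ball_abs.mpr hw1)
  refine ⟨br, hb0, ?_⟩
  intro z w hz hw
  have h := hstep2 z hz w hw
  linear_combination h
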